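/- Let R = (p,q) be a normalized pair in ℝⁿ₊ (|p| = |q| = 1) with q strictly positive entrywise, and let 1 denote the trivial resource ((1),(1)) in ℝ¹. Then: (a) for every λ ∈ [0,1], z*_λ(1→R) = λ · max_{1≤k≤n} p_k/q_k; (b) for every z ≥ 1, ε*_z(1→R) = Σ_{k=1}^n (p_k − z q_k)₊ = η̂*_z(1→R), where (t)₊ := max(t,0). -/

import Mathlib

open scoped BigOperators

/-- A test: a vector with entries in `[0,1]`. -/
def IsTest {ι : Type*} [Fintype ι] (t : ι → ℝ) : Prop := ∀ i, 0 ≤ t i ∧ t i ≤ 1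

/-- Dot product of two vectors. -/
def dot {ι : Type*} [Fintype ι] (t p : ι → ℝ) : ℝ := ∑ i, t i * p i

/-- `beta x p q` is the infimum of `t ⬝ q` over tests `t` with `t ⬝ p ≥ x`,
with value `⊤` (`+∞`) when no feasible test exists. -/
noncomputable def beta {ι : Type*} [Fintype ι] (x : ℝ) (p q : ι → ℝ) : EReal :=
  sInf {y : EReal | ∃ t : ι → ℝ, IsTest t ∧ x ≤ dot t p ∧ y = ((dot t q : ℝ) : EReal)}

/-- `alpha y p q` is the supremum of `t ⬝ p` over tests `t` with `t ⬝ q ≤ y`. -/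
noncomputable def alpha {ι : Type*} [Fintype ι] (y : ℝ) (p q : ι → ℝ) : ℝ :=
  sSup {x : ℝ | ∃ t : ι → ℝ, IsTest t ∧ dot t q ≤ y ∧ x = dot t p}

/-- A nonnegative matrix all of whose column sums are at most `1`. -/
def Substochastic {ι' ι : Type*} [Fintype ι'] [Fintype ι] (M : Matrix ι' ι ℝ) : Prop :=
  (∀ i j, 0 ≤ M i j) ∧ ∀ j, ∑ i, M i j ≤ 1

/-- A nonnegative matrix all of whose column sums equal `1`. -/
def Stochastic {ι' ι : Type*} [Fintype ι'] [Fintype ι] (M : Matrix ι' ι ℝ) : Prop :=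
  (∀ i j, 0 ≤ M i j) ∧ ∀ j, ∑ i, M i j = 1

/-- Relative submajorization: `(p,q) ≻ (p',q')`. -/
def SubMaj {ι ι' : Type*} [Fintype ι] [Fintype ι'] (p q : ι → ℝ) (p' q' : ι' → ℝ) : Prop :=
  ∃ M : Matrix ι' ι ℝ, Substochastic M ∧
    (∀ i, p' i ≤ M.mulVec p i) ∧ (∀ i, M.mulVec q i ≤ q' i)

/-- Relative majorization: `(p,q) ≽ (p',q')`. -/
def RelMaj {ι ι' : Type*} [Fintype ι] [Fintype ι'] (p q : ι → ℝ) (p' q' : ι' → ℝ) : Prop :=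
  ∃ M : Matrix ι' ι ℝ, Stochastic M ∧ M.mulVec p = p' ∧ M.mulVec q = q'

/-- Approximate relative submajorization: `(p,q) ≻_{ε,η} (p',q')`. -/
def ApproxSubMaj {ι ι' : Type*} [Fintype ι] [Fintype ι'] (ε η : ℝ)
    (p q : ι → ℝ) (p' q' : ι' → ℝ) : Prop :=
  ∃ (M : Matrix ι' ι ℝ) (a b : ι' → ℝ), Substochastic M ∧
    (∀ i, 0 ≤ a i) ∧ (∀ i, 0 ≤ b i) ∧ (∑ i, a i) ≤ ε ∧ (∑ i, b i) ≤ η ∧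
    (∀ i, p' i - a i ≤ M.mulVec p i) ∧ (∀ i, M.mulVec q i ≤ q' i + b i)

/-- Partial sum `∑_{j=1}^k v_{π(j)}` of the first `k` entries of `v` in the order given by `π`. -/
def psum {n : ℕ} (v : Fin n → ℝ) (π : Equiv.Perm (Fin n)) (k : ℕ) : ℝ :=
  ∑ j ∈ Finset.univ.filter (fun j : Fin n => (j : ℕ) < k), v (π j)

/-- `λ*_z(R→R')`: the largest `λ ∈ [0,1]` with `(p,q) ≻ (λ p', z q')`. -/
noncomputable def lambdaStar {ι ι' : Type*} [Fintype ι] [Fintype ι'] (z : ℝ)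
    (p q : ι → ℝ) (p' q' : ι' → ℝ) : ℝ :=
  sSup {lam : ℝ | 0 ≤ lam ∧ lam ≤ 1 ∧
    SubMaj p q (fun i => lam * p' i) (fun i => z * q' i)}

/-- `z*_λ(R→R')`: the smallest `z ≥ 0` with `(p,q) ≻ (λ p', z q')`. -/
noncomputable def zStar {ι ι' : Type*} [Fintype ι] [Fintype ι'] (lam : ℝ)
    (p q : ι → ℝ) (p' q' : ι' → ℝ) : ℝ :=
  sInf {z : ℝ | 0 ≤ z ∧ SubMaj p q (fun i => lam * p' i) (fun i => z * q' i)}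

/-- `ε*_z(R→R')`: the smallest error of the first kind. -/
noncomputable def epsStar {ι ι' : Type*} [Fintype ι] [Fintype ι'] (z : ℝ)
    (p q : ι → ℝ) (p' q' : ι' → ℝ) : ℝ :=
  sInf {ε : ℝ | 0 ≤ ε ∧ ApproxSubMaj ε 0 p q p' (fun i => z * q' i)}

/-- `η̂*_z(R→R')`: the smallest error of the second kind. -/
noncomputable def etaStar {ι ι' : Type*} [Fintype ι] [Fintype ι'] (z : ℝ)
    (p q : ι → ℝ) (p' q' : ι' → ℝ) : ℝ :=
  sInf {η : ℝ | 0 ≤ η ∧ ApproxSubMaj 0 η p q p' (fun i => z * q' i)}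

/-- Relative entropy `D(u,v) = Σ u_k ln(u_k/v_k)` (with `0 ln 0 = 0`). -/
noncomputable def relEnt {ι : Type*} [Fintype ι] (u v : ι → ℝ) : ℝ :=
  ∑ k, u k * Real.log (u k / v k)


/-- mulVec from the trivial source just reads off column 0. -/
lemma mulVec_one_src {m : ℕ} (M : Matrix (Fin m) (Fin 1) ℝ) (i : Fin m) :
    M.mulVec (fun _ : Fin 1 => (1 : ℝ)) i = M i 0 := by
  simp [Matrix.mulVec, dotProduct]

lemma submaj_one_iff {m : ℕ} (p' q' : Fin m → ℝ)
    (h0 : ∀ i, 0 ≤ p' i) (hs : ∑ i, p' i ≤ 1) :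
    SubMaj (fun _ : Fin 1 => (1 : ℝ)) (fun _ : Fin 1 => (1 : ℝ)) p' q' ↔
      ∀ i, p' i ≤ q' i := by
  constructor
  · rintro ⟨M, hM, h1, h2⟩ i
    have := (h1 i).trans (le_of_eq (mulVec_one_src M i))
    have h2' := (mulVec_one_src M i) ▸ (h2 i)
    exact this.trans h2'
  · intro h
    refine ⟨fun i _ => p' i, ⟨fun i j => h0 i, fun j => hs⟩, fun i => ?_, fun i => ?_⟩
    · erw [mulVec_one_src]
    · erw [mulVec_one_src]; exact h i

/-- Work cost of a resource `R = (p,q)`: transformations `1 → R` from the trivial resource. -/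
theorem stmt_15 {n : ℕ} (p q : Fin n → ℝ)
    (hp : ∀ i, 0 ≤ p i) (hq : ∀ i, 0 < q i)
    (hpn : ∑ i, p i = 1) (hqn : ∑ i, q i = 1) :
    (∀ lam : ℝ, 0 ≤ lam → lam ≤ 1 →
        zStar lam (fun _ : Fin 1 => (1 : ℝ)) (fun _ : Fin 1 => (1 : ℝ)) p q
          = lam * ⨆ k : Fin n, p k / q k) ∧
    (∀ z : ℝ, 1 ≤ z →
        epsStar z (fun _ : Fin 1 => (1 : ℝ)) (fun _ : Fin 1 => (1 : ℝ)) p q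
            = ∑ k, max (p k - z * q k) 0 ∧
        etaStar z (fun _ : Fin 1 => (1 : ℝ)) (fun _ : Fin 1 => (1 : ℝ)) p q
            = ∑ k, max (p k - z * q k) 0) := by
  have hn : Nonempty (Fin n) := by
    rcases Nat.eq_zero_or_pos n with h | h
    · subst h; simp at hpn
    · exact ⟨⟨0, h⟩⟩
  have hbdd : BddAbove (Set.range fun k => p k / q k) := (Set.finite_range _).bddAbove
  set C : ℝ := ⨆ k : Fin n, p k / q k with hC
  haveI := hn
  obtain ⟨k0⟩ := hn
  have hC0 : 0 ≤ C := le_trans (div_nonneg (hp k0) (hq k0).le) (le_ciSup hbdd k0)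
  constructor
  · intro lam hl0 hl1
    have key : ∀ z : ℝ, ((∀ i, lam * p i ≤ z * q i) ↔ lam * C ≤ z) := by
      intro z
      rw [hC, Real.mul_iSup_of_nonneg hl0]
      rw [ciSup_le_iff (by
        have : (Set.range fun k => lam * (p k / q k)).Finite := Set.finite_range _
        exact this.bddAbove)]
      constructor
      · intro h k
        rw [mul_div_assoc'] at *
        exact (div_le_iff₀ (hq k)).2 (h k)
      · intro h k
        have := h k
        rw [mul_div_assoc', div_le_iff₀ (hq k)] at this
        exact this
    have hset : {z : ℝ | 0 ≤ z ∧ SubMaj (fun _ : Fin 1 => (1 : ℝ))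
        (fun _ : Fin 1 => (1 : ℝ)) (fun i => lam * p i) (fun i => z * q i)}
        = Set.Ici (lam * C) := by
      ext z
      simp only [Set.mem_setOf_eq, Set.mem_Ici]
      rw [submaj_one_iff _ _ (fun i => mul_nonneg hl0 (hp i))
        (by rw [← Finset.mul_sum, hpn, mul_one]; exact hl1)]
      constructor
      · rintro ⟨_, h⟩; exact (key z).1 h
      · intro h
        exact ⟨le_trans (mul_nonneg hl0 hC0) h, (key z).2 h⟩
    rw [zStar, hset, csInf_Ici]
  · intro z hz
    have hE0 : 0 ≤ ∑ k, max (p k - z * q k) 0 :=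
      Finset.sum_nonneg fun k _ => le_max_right _ _
    set E := ∑ k, max (p k - z * q k) 0 with hEdef
    constructor
    · -- epsStar
      have hset : {ε : ℝ | 0 ≤ ε ∧ ApproxSubMaj ε 0 (fun _ : Fin 1 => (1 : ℝ))
          (fun _ : Fin 1 => (1 : ℝ)) p (fun i => z * q i)} = Set.Ici E := by
        ext ε
        simp only [Set.mem_setOf_eq, Set.mem_Ici]
        constructor
        · rintro ⟨hε0, M, a, b, hM, ha, hb, hsa, hsb, h1, h2⟩
          have hb0 : ∀ i, b i = 0 := by
            intro i
            have : ∑ i, b i = 0 := le_antisymm hsb (Finset.sum_nonneg fun i _ => hb i)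
            have := (Finset.sum_eq_zero_iff_of_nonneg (fun i _ => hb i)).1 this i (Finset.mem_univ i)
            exact this
          have : E ≤ ∑ i, a i := by
            apply Finset.sum_le_sum
            intro i _
            have h1i := h1 i
            have h2i := h2 i
            rw [mulVec_one_src] at h1i h2i
            rw [hb0 i] at h2i
            dsimp only at h2i
            exact max_le (by linarith) (ha i)
          linarith
        · intro hε
          refine ⟨le_trans hE0 hε,
            fun i _ => min (p i) (z * q i), fun i => max (p i - z * q i) 0, 0,
            ⟨fun i j => le_min (hp i) (mul_nonneg (by linarith) (hq i).le), fun j => ?_⟩,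
            fun i => le_max_right _ _, fun i => le_refl 0, le_trans (le_of_eq rfl) hε,
            by simp, fun i => ?_, fun i => ?_⟩
          · calc ∑ i, min (p i) (z * q i) ≤ ∑ i, p i :=
                  Finset.sum_le_sum fun i _ => min_le_left _ _
              _ = 1 := hpn
          · erw [mulVec_one_src]
            rcases le_total (p i) (z * q i) with h | h
            · simp [min_eq_left h, max_eq_right (by linarith : p i - z * q i ≤ 0)]
            · simp [min_eq_right h, max_eq_left (by linarith : (0:ℝ) ≤ p i - z * q i)]
          · erw [mulVec_one_src]
            simp only [Pi.zero_apply, add_zero]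
            exact min_le_right _ _
      rw [epsStar, hset, csInf_Ici]
    · -- etaStar
      have hset : {η : ℝ | 0 ≤ η ∧ ApproxSubMaj 0 η (fun _ : Fin 1 => (1 : ℝ))
          (fun _ : Fin 1 => (1 : ℝ)) p (fun i => z * q i)} = Set.Ici E := by
        ext η
        simp only [Set.mem_setOf_eq, Set.mem_Ici]
        constructor
        · rintro ⟨hη0, M, a, b, hM, ha, hb, hsa, hsb, h1, h2⟩
          have ha0 : ∀ i, a i = 0 := by
            intro i
            have : ∑ i, a i = 0 := le_antisymm hsa (Finset.sum_nonneg fun i _ => ha i)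
            exact (Finset.sum_eq_zero_iff_of_nonneg (fun i _ => ha i)).1 this i (Finset.mem_univ i)
          have : E ≤ ∑ i, b i := by
            apply Finset.sum_le_sum
            intro i _
            have h1i := h1 i
            have h2i := h2 i
            rw [mulVec_one_src] at h1i h2i
            rw [ha0 i] at h1i
            dsimp only at h2i
            exact max_le (by linarith) (hb i)
          linarith
        · intro hη
          refine ⟨le_trans hE0 hη,
            fun i _ => p i, 0, fun i => max (p i - z * q i) 0,
            ⟨fun i j => hp i, fun j => le_of_eq hpn⟩,
            fun i => le_refl 0, fun i => le_max_right _ _, by simp,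
            le_trans (le_of_eq rfl) hη, fun i => ?_, fun i => ?_⟩
          · erw [mulVec_one_src]
            simp
          · erw [mulVec_one_src]
            have := le_max_left (p i - z * q i) 0
            dsimp only
            linarith
      rw [etaStar, hset, csInf_Ici]
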